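/- For every p ∈ (0,1) with p ≠ 1/2, the function g(t) = (1/t²)·log( (1−p)·exp(−t·p) + p·exp(t·(1−p)) ), defined for t ≠ 0, has derivative zero at t* = 2·log((1−p)/p): g′(t*) = 0. -/

import Mathlib

/-- The function `g(t) = t⁻² log((1-p)e^{-tp} + p e^{t(1-p)})` has derivative zero
at `t* = 2 log((1-p)/p)`. -/
theorem deriv_g_at_tstar (p : ℝ) (hp0 : 0 < p) (hp1 : p < 1) (hp : p ≠ 1/2) :
    HasDerivAt
      (fun t : ℝ => (1 / t^2) *
        Real.log ((1 - p) * Real.exp (-t * p) + p * Real.exp (t * (1 - p))))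
      0 (2 * Real.log ((1 - p) / p)) := by
  have hp' : 0 < 1 - p := by linarith
  set r : ℝ := (1 - p) / p with hrdef
  have hr : 0 < r := div_pos hp' hp0
  have hr1 : r ≠ 1 := by
    rw [hrdef]
    intro h
    rw [div_eq_one_iff_eq (ne_of_gt hp0)] at h
    apply hp; linarith
  set t₀ : ℝ := 2 * Real.log r with ht₀def
  have hl : Real.log r ≠ 0 := by
    intro h
    rcases Real.log_eq_zero.mp h with h | h | h <;> [linarith; exact hr1 h; linarith]
  have ht₀ : t₀ ≠ 0 := by
    rw [ht₀def]; exact mul_ne_zero two_ne_zero hl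
  have hexp : Real.exp t₀ = r ^ 2 := by
    rw [ht₀def, two_mul, Real.exp_add, Real.exp_log hr, sq]
  set E : ℝ := Real.exp (-t₀ * p) with hEdef
  have hE : 0 < E := Real.exp_pos _
  have hf2 : Real.exp (t₀ * (1 - p)) = r ^ 2 * E := by
    rw [hEdef, ← hexp, ← Real.exp_add]
    ring_nf
  have hfval : (1 - p) * E + p * Real.exp (t₀ * (1 - p)) = E * r := by
    rw [hf2]
    have h1 : (1 - p) + p * r ^ 2 = r := by
      rw [hrdef]
      field_simp
      ring
    linear_combination E * h1
  have hfpos : 0 < (1 - p) * Real.exp (-t₀ * p) + p * Real.exp (t₀ * (1 - p)) := by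
    rw [← hEdef, hfval]
    exact mul_pos hE hr
  have hfne : (1 - p) * Real.exp (-t₀ * p) + p * Real.exp (t₀ * (1 - p)) ≠ 0 :=
    ne_of_gt hfpos
  -- derivative of the inner function
  have ha : HasDerivAt (fun t : ℝ => -t * p) (-p) t₀ := by
    simpa using ((hasDerivAt_id t₀).neg.mul_const p)
  have hb : HasDerivAt (fun t : ℝ => t * (1 - p)) (1 - p) t₀ := by
    simpa using (hasDerivAt_id t₀).mul_const (1 - p)
  have h1 : HasDerivAt
      (fun t : ℝ => (1 - p) * Real.exp (-t * p) + p * Real.exp (t * (1 - p)))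
      ((1 - p) * (Real.exp (-t₀ * p) * (-p)) + p * (Real.exp (t₀ * (1 - p)) * (1 - p)))
      t₀ :=
    (ha.exp.const_mul (1 - p)).add (hb.exp.const_mul p)
  have h2 := h1.log hfne
  have hsq : HasDerivAt (fun t : ℝ => t ^ 2) (2 * t₀) t₀ := by
    simpa using hasDerivAt_pow 2 t₀
  have h3 : HasDerivAt (fun t : ℝ => 1 / t ^ 2) (-(2 * t₀) / (t₀ ^ 2) ^ 2) t₀ := by
    simpa [one_div] using hsq.fun_inv (pow_ne_zero 2 ht₀)
  have h := h3.fun_mul h2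
  refine h.congr_deriv (Eq.symm ?_)
  -- now compute that the derivative is 0
  have hlog : Real.log ((1 - p) * Real.exp (-t₀ * p) + p * Real.exp (t₀ * (1 - p)))
      = -t₀ * p + Real.log r := by
    rw [← hEdef, hfval, Real.log_mul (ne_of_gt hE) (ne_of_gt hr), hEdef, Real.log_exp]
  rw [← hEdef, hlog, hf2]
  have hrp : p * r = 1 - p := by
    rw [hrdef]; field_simp
  have hEne := ne_of_gt hE
  have hrne := ne_of_gt hr
  have key : ((1 - p) * (E * -p) + p * (r ^ 2 * E * (1 - p))) /
      ((1 - p) * E + p * (r ^ 2 * E)) = 1 - 2 * p := by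
    have hnum : (1 - p) * (E * -p) + p * (r ^ 2 * E * (1 - p)) = (1 - 2 * p) * (E * r) := by
      linear_combination E * ((1 - p) * r + p) * hrp
    have hden : (1 - p) * E + p * (r ^ 2 * E) = E * r := by
      linear_combination E * (r - 1) * hrp
    rw [hnum, hden, mul_div_assoc, div_self (mul_ne_zero hEne hrne), mul_one]
  rw [key, ht₀def]
  generalize hL : Real.log r = L at hl ⊢
  field_simp
  ring
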